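/- Let n ≥ 1 and let N_n be the matroid on Fin (n+1) in which 0 is a loop and every other set is independent iff it has at most 2 non-zero elements; that is, the rank of a set S equals min(2, |S \ {0}|). There is an online matroid morphism from the class of matroids with at most n elements and rank at most 2 into N_n. -/

import Mathlib

open Set

/-- The rank of a set in a matroid: the supremum of the cardinalities of its
independent subsets. -/
noncomputable def mRank {α : Type*} (M : Matroid α) (S : Set α) : ℕ∞ :=
  ⨆ I ∈ {I : Set α | M.Indep I ∧ I ⊆ S}, I.encard

/-- The rank of a set of vectors: the dimension of its linear span. -/
noncomputable def spanRank (K : Type*) [Field K] {W : Type*} [AddCommGroup W] [Module K W]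
    (S : Set W) : ℕ :=
  Module.finrank K (Submodule.span K S)

/-- The `k`-prefix of an ordered matroid on `Fin m`: its restriction to the
first `k` elements, viewed as a matroid on `Fin k`. -/
def prefixMatroid {k m : ℕ} (h : k ≤ m) (M : Matroid (Fin m)) : Matroid (Fin k) :=
  M.comap (Fin.castLE h)

/-- An online matroid morphism (OMM) of the class `P` of ordered matroids into the host
matroid `N`: a rank-preserving map for each matroid of the class, consistent on prefixes. -/
def OMMof (P : (m : ℕ) → Matroid (Fin m) → Prop) {β : Type*} (N : Matroid β) : Prop :=
  ∃ f : (m : ℕ) → Matroid (Fin m) → (Fin m → β),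
    (∀ m (M : Matroid (Fin m)), P m M →
      ∀ S : Set (Fin m), S ⊆ M.E → mRank N (f m M '' S) = mRank M S) ∧
    (∀ k m (hkm : k ≤ m) (M : Matroid (Fin m)), P m M →
      ∀ i : Fin k, f k (prefixMatroid hkm M) i = f m M (Fin.castLE hkm i))

/-- An online matroid embedding (OME): an online matroid morphism all of whose maps are
injective. -/
def OMEof (P : (m : ℕ) → Matroid (Fin m) → Prop) {β : Type*} (N : Matroid β) : Prop :=
  ∃ f : (m : ℕ) → Matroid (Fin m) → (Fin m → β),
    (∀ m (M : Matroid (Fin m)), P m M → Function.Injective (f m M)) ∧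
    (∀ m (M : Matroid (Fin m)), P m M →
      ∀ S : Set (Fin m), S ⊆ M.E → mRank N (f m M '' S) = mRank M S) ∧
    (∀ k m (hkm : k ≤ m) (M : Matroid (Fin m)), P m M →
      ∀ i : Fin k, f k (prefixMatroid hkm M) i = f m M (Fin.castLE hkm i))

namespace OMMaux

variable {α : Type*} {M₀ : Matroid α} {a b c : α} {I S : Set α}

def Par (M : Matroid α) (a b : α) : Prop := a = b ∨ ¬ M.Indep {a, b}

lemma par_symm (h : Par M₀ a b) : Par M₀ b a := by
  rcases h with h | h
  · exact Or.inl h.symm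
  · exact Or.inr (by rwa [pair_comm])

lemma indep_pair_iff (ha : M₀.Indep {a}) (hb : b ∈ M₀.E) (hab : b ≠ a) :
    M₀.Indep {a, b} ↔ b ∉ M₀.closure {a} := by
  have h1 := Matroid.Indep.insert_indep_iff_of_notMem ha (e := b) (by simp [hab])
  rw [show ({a, b} : Set α) = insert b {a} from pair_comm a b, h1]
  simp [hb]

lemma par_trans (ha : M₀.Indep {a}) (hb : M₀.Indep {b}) (hc : M₀.Indep {c})
    (hab : Par M₀ a b) (hbc : Par M₀ b c) : Par M₀ a c := by
  rcases hab with rfl | hab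
  · exact hbc
  rcases hbc with rfl | hbc
  · exact Or.inr hab
  by_cases hac : a = c
  · exact Or.inl hac
  have hba : b ≠ a := by rintro rfl; rw [Set.pair_eq_singleton] at hab; exact hab ha
  have hcb : c ≠ b := by rintro rfl; rw [Set.pair_eq_singleton] at hbc; exact hbc hb
  have hbcl : b ∈ M₀.closure {a} := by
    by_contra h
    exact hab ((indep_pair_iff ha (hb.subset_ground rfl) hba).mpr h)
  have hccl : c ∈ M₀.closure {b} := by
    by_contra h
    exact hbc ((indep_pair_iff hb (hc.subset_ground rfl) hcb).mpr h)
  have hsub : M₀.closure {b} ⊆ M₀.closure {a} :=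
    M₀.closure_subset_closure_of_subset_closure (by simpa using hbcl)
  exact Or.inr fun hI =>
    ((indep_pair_iff ha (hc.subset_ground rfl) (Ne.symm hac)).mp hI) (hsub hccl)

lemma le_mRank (hI : M₀.Indep I) (hIS : I ⊆ S) : I.encard ≤ mRank M₀ S :=
  le_iSup₂_of_le I ⟨hI, hIS⟩ le_rfl

lemma mRank_le_iff {c : ℕ∞} :
    mRank M₀ S ≤ c ↔ ∀ I, M₀.Indep I → I ⊆ S → I.encard ≤ c := by
  rw [mRank, iSup₂_le_iff]
  exact ⟨fun h I h1 h2 => h I ⟨h1, h2⟩, fun h I hI => h I hI.1 hI.2⟩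

def parSet {m : ℕ} (M : Matroid (Fin m)) (i : Fin m) : Set ℕ :=
  {t : ℕ | ∃ ht : t < m, M.Indep {(⟨t, ht⟩ : Fin m)} ∧ Par M ⟨t, ht⟩ i}

noncomputable def lp {m : ℕ} (M : Matroid (Fin m)) (i : Fin m) : ℕ :=
  sInf (parSet M i)

open Classical in
noncomputable def fmap (n : ℕ) {m : ℕ} (M : Matroid (Fin m)) (i : Fin m) : Fin (n + 1) :=
  if M.Indep {i} then ⟨(lp M i + 1) % (n + 1), Nat.mod_lt _ (Nat.succ_pos n)⟩ else 0

variable {m : ℕ} {M : Matroid (Fin m)} {i j : Fin m}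

lemma self_mem_parSet (hi : M.Indep {i}) : (i : ℕ) ∈ parSet M i :=
  ⟨i.2, by simpa using ⟨Matroid.indep_singleton.mp hi, Or.inl rfl⟩⟩

lemma lp_mem (hi : M.Indep {i}) : lp M i ∈ parSet M i :=
  Nat.sInf_mem ⟨i, self_mem_parSet hi⟩

lemma lp_le (hi : M.Indep {i}) : lp M i ≤ (i : ℕ) :=
  Nat.sInf_le (self_mem_parSet hi)

lemma lp_lt (hi : M.Indep {i}) : lp M i < m :=
  (lp_mem hi).1

lemma lp_eq_of_par (hi : M.Indep {i}) (hj : M.Indep {j}) (hij : Par M i j) :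
    lp M i = lp M j := by
  have hset : parSet M i = parSet M j := by
    ext t
    constructor
    · rintro ⟨ht, hIt, hPt⟩
      exact ⟨ht, hIt, par_trans hIt hi hj hPt hij⟩
    · rintro ⟨ht, hIt, hPt⟩
      exact ⟨ht, hIt, par_trans hIt hj hi hPt (par_symm hij)⟩
  rw [lp, lp, hset]

lemma par_of_lp_eq (hi : M.Indep {i}) (hj : M.Indep {j}) (h : lp M i = lp M j) :
    Par M i j := by
  obtain ⟨ht, hIt, hPt⟩ := lp_mem hi
  have h2 := lp_mem hj
  rw [← h] at h2
  obtain ⟨ht', hIt', hPt'⟩ := h2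
  exact par_trans hi hIt hj (par_symm hPt) hPt'

lemma fmap_val {n : ℕ} (hmn : m ≤ n) (hi : M.Indep {i}) :
    (fmap n M i : ℕ) = lp M i + 1 := by
  rw [fmap, if_pos hi]
  exact Nat.mod_eq_of_lt (by have := lp_lt hi; omega)

lemma fmap_ne_zero {n : ℕ} (hmn : m ≤ n) (hi : M.Indep {i}) : fmap n M i ≠ 0 := by
  intro h
  have := fmap_val hmn hi
  rw [h] at this
  simp at this

lemma fmap_eq_zero {n : ℕ} (hi : ¬ M.Indep {i}) : fmap n M i = 0 := by
  rw [fmap, if_neg hi]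

lemma fmap_of_indep {n : ℕ} (hi : M.Indep {i}) :
    fmap n M i = ⟨(lp M i + 1) % (n + 1), Nat.mod_lt _ (Nat.succ_pos n)⟩ := by
  rw [fmap, if_pos hi]

section Prefix

variable {k : ℕ}

lemma prefix_indep_singleton (hkm : k ≤ m) (M : Matroid (Fin m)) (i : Fin k) :
    (prefixMatroid hkm M).Indep {i} ↔ M.Indep {Fin.castLE hkm i} := by
  simp [prefixMatroid, Matroid.comap_indep_iff]

lemma prefix_indep_pair (hkm : k ≤ m) (M : Matroid (Fin m)) (a b : Fin k) :
    (prefixMatroid hkm M).Indep {a, b} ↔ M.Indep {Fin.castLE hkm a, Fin.castLE hkm b} := by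
  rw [prefixMatroid, Matroid.comap_indep_iff, Set.image_pair]
  simp only [and_iff_left_iff_imp]
  intro _
  exact ((Fin.castLE_injective hkm).injOn)

lemma prefix_par (hkm : k ≤ m) (M : Matroid (Fin m)) (a b : Fin k) :
    Par (prefixMatroid hkm M) a b ↔ Par M (Fin.castLE hkm a) (Fin.castLE hkm b) := by
  unfold Par
  rw [prefix_indep_pair, (Fin.castLE_injective hkm).eq_iff]

lemma prefix_lp (hkm : k ≤ m) (M : Matroid (Fin m)) (i : Fin k)
    (hi : (prefixMatroid hkm M).Indep {i}) :
    lp (prefixMatroid hkm M) i = lp M (Fin.castLE hkm i) := by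
  have hi' : M.Indep {Fin.castLE hkm i} := (prefix_indep_singleton hkm M i).mp hi
  have hcast : ∀ (t : ℕ) (ht : t < k),
      Fin.castLE hkm (⟨t, ht⟩ : Fin k) = (⟨t, ht.trans_le hkm⟩ : Fin m) := fun t ht => rfl
  apply le_antisymm
  · have hmem : lp M (Fin.castLE hkm i) ∈ parSet M (Fin.castLE hkm i) :=
      Nat.sInf_mem ⟨(Fin.castLE hkm i : ℕ), (Fin.castLE hkm i).2, by
        simpa using ⟨Matroid.indep_singleton.mp hi', Or.inl rfl⟩⟩
    obtain ⟨ht, hIt, hPt⟩ := hmem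
    have h1 : lp M (Fin.castLE hkm i) ≤ (Fin.castLE hkm i : ℕ) :=
      Nat.sInf_le ⟨(Fin.castLE hkm i).2, by simpa using ⟨Matroid.indep_singleton.mp hi', Or.inl rfl⟩⟩
    have h2 : (Fin.castLE hkm i : ℕ) < k := i.2
    have hlt : lp M (Fin.castLE hkm i) < k := by omega
    refine Nat.sInf_le ⟨hlt, ?_, ?_⟩
    · rw [prefix_indep_singleton, hcast _ hlt]
      exact hIt
    · rw [prefix_par, hcast _ hlt]
      exact hPt
  · have hmem : lp (prefixMatroid hkm M) i ∈ parSet (prefixMatroid hkm M) i :=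
      Nat.sInf_mem ⟨(i : ℕ), i.2, by simpa using ⟨Matroid.indep_singleton.mp hi, Or.inl rfl⟩⟩
    obtain ⟨ht, hIt, hPt⟩ := hmem
    refine Nat.sInf_le ⟨ht.trans_le hkm, ?_, ?_⟩
    · rw [← hcast _ ht, ← prefix_indep_singleton]
      exact hIt
    · rw [← hcast _ ht, ← prefix_par]
      exact hPt

end Prefix

end OMMaux

/-- Let `N` be the matroid on `Fin (n+1)` in which `0` is a loop and the rank of a set `S`
is `min 2 |S \ {0}|`.  For `n ≥ 1` there is an online matroid morphism from the class of
matroids with at most `n` elements and rank at most `2` into `N`. -/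


theorem stmt11 (n : ℕ) (hn : 1 ≤ n) (N : Matroid (Fin (n + 1))) (hE : N.E = univ)
    (hr : ∀ S : Set (Fin (n + 1)), mRank N S = min 2 (S \ {0}).encard) :
    OMMof (fun m M => m ≤ n ∧ M.E = univ ∧ mRank M univ ≤ 2) N := by
  classical
  refine ⟨fun m M => OMMaux.fmap n M, ?_, ?_⟩
  · rintro m M ⟨hmn, hME, hrk⟩ S hSE
    rw [hr]
    set nl : Set (Fin m) := {i | i ∈ S ∧ M.Indep {i}} with hnl
    have himg : (OMMaux.fmap n M '' S) \ {0} = OMMaux.fmap n M '' nl := by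
      ext x
      constructor
      · rintro ⟨⟨i, hiS, rfl⟩, hx0⟩
        simp only [mem_singleton_iff] at hx0
        by_cases hIi : M.Indep {i}
        · exact ⟨i, ⟨hiS, hIi⟩, rfl⟩
        · exact absurd (OMMaux.fmap_eq_zero hIi) hx0
      · rintro ⟨i, ⟨hiS, hIi⟩, rfl⟩
        exact ⟨⟨i, hiS, rfl⟩, by simpa using OMMaux.fmap_ne_zero hmn hIi⟩
    rw [himg]
    by_cases hA : nl = ∅
    · rw [hA, image_empty, encard_empty]
      rw [min_eq_right (by norm_num : (0 : ℕ∞) ≤ 2)]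
      symm
      refine le_antisymm (OMMaux.mRank_le_iff.mpr fun I hI hIS => ?_) (zero_le)
      have hIe : I = ∅ := by
        rw [eq_empty_iff_forall_notMem]
        intro i hiI
        have : i ∈ nl := ⟨hIS hiI, hI.subset (singleton_subset_iff.mpr hiI)⟩
        rw [hA] at this
        exact this
      simp [hIe]
    · by_cases hB : ∀ i ∈ nl, ∀ j ∈ nl, OMMaux.Par M i j
      · obtain ⟨a, ha⟩ := nonempty_iff_ne_empty.mpr hA
        have himg2 : OMMaux.fmap n M '' nl = {OMMaux.fmap n M a} := by
          apply Subset.antisymm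
          · rintro x ⟨i, hi, rfl⟩
            simp only [mem_singleton_iff]
            apply Fin.ext
            rw [OMMaux.fmap_val hmn hi.2, OMMaux.fmap_val hmn ha.2,
              OMMaux.lp_eq_of_par hi.2 ha.2 (hB i hi a ha)]
          · simp only [singleton_subset_iff]
            exact ⟨a, ha, rfl⟩
        rw [himg2, encard_singleton, min_eq_right (by norm_num : (1 : ℕ∞) ≤ 2)]
        apply le_antisymm
        · have := OMMaux.le_mRank (M₀ := M) ha.2 (singleton_subset_iff.mpr ha.1)
          simpa using this
        · refine OMMaux.mRank_le_iff.mpr fun I hI hIS => ?_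
          rw [encard_le_one_iff]
          intro x y hx hy
          have hxnl : x ∈ nl := ⟨hIS hx, hI.subset (singleton_subset_iff.mpr hx)⟩
          have hynl : y ∈ nl := ⟨hIS hy, hI.subset (singleton_subset_iff.mpr hy)⟩
          rcases hB x hxnl y hynl with h | h
          · exact h
          · exact absurd (hI.subset (pair_subset hx hy)) h
      · push_neg at hB
        obtain ⟨i, hi, j, hj, hnp⟩ := hB
        simp only [OMMaux.Par, not_or, not_not] at hnp
        obtain ⟨hij, hIij⟩ := hnp
        have hlp : OMMaux.lp M i ≠ OMMaux.lp M j := fun h =>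
          (by
              exact absurd (OMMaux.par_of_lp_eq hi.2 hj.2 h) (by simp [OMMaux.Par, hij, hIij]))
        have hfne : OMMaux.fmap n M i ≠ OMMaux.fmap n M j := by
          intro h
          apply hlp
          have := congrArg Fin.val h
          rw [OMMaux.fmap_val hmn hi.2, OMMaux.fmap_val hmn hj.2] at this
          omega
        have h2le : 2 ≤ (OMMaux.fmap n M '' nl).encard := by
          have hsub : {OMMaux.fmap n M i, OMMaux.fmap n M j} ⊆ OMMaux.fmap n M '' nl :=
            pair_subset ⟨i, hi, rfl⟩ ⟨j, hj, rfl⟩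
          calc (2 : ℕ∞) = ({OMMaux.fmap n M i, OMMaux.fmap n M j} : Set _).encard :=
                (encard_pair hfne).symm
            _ ≤ _ := encard_mono hsub
        rw [min_eq_left h2le]
        apply le_antisymm
        · have h1 : ({i, j} : Set (Fin m)).encard ≤ mRank M S :=
            OMMaux.le_mRank hIij (pair_subset hi.1 hj.1)
          rwa [encard_pair hij] at h1
        · have hmono : mRank M S ≤ mRank M univ :=
            OMMaux.mRank_le_iff.mpr fun I hI _ => OMMaux.le_mRank hI (subset_univ I)
          exact hmono.trans hrk
  · rintro k m hkm M ⟨hmn, hME, hrk⟩ i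
    show OMMaux.fmap n (prefixMatroid hkm M) i = OMMaux.fmap n M (Fin.castLE hkm i)
    have hiff := OMMaux.prefix_indep_singleton hkm M i
    by_cases h : M.Indep {Fin.castLE hkm i}
    · rw [OMMaux.fmap_of_indep (hiff.mpr h), OMMaux.fmap_of_indep h]
      apply Fin.ext
      simp only
      rw [OMMaux.prefix_lp hkm M i (hiff.mpr h)]
    · rw [OMMaux.fmap_eq_zero (fun hh => h (hiff.mp hh)), OMMaux.fmap_eq_zero h]
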